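/- Under the same assumptions, if H_c ⊆ H and A_c ⊆ A are maximal abelian subalgebras, then A_c · ζ̃(H_c) is a maximal abelian subalgebra of A >⋊ H. -/

import Mathlib

set_option linter.unusedSectionVars false
set_option maxHeartbeats 1000000
open TensorProduct

/-- `A` is a unital right `H`-module algebra via the bilinear action `act` (written `a ◁ g`):
`a ◁ 1 = a`, `a ◁ (g g') = (a ◁ g) ◁ g'`, `(a a') ◁ g = (a ◁ g₍₁₎)(a' ◁ g₍₂₎)`,
and `1 ◁ g = ε(g) 1`. -/
structure RightModuleAlgebra (k : Type) [Field k] (H A : Type) [Ring H] [Ring A]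
    [HopfAlgebra k H] [Algebra k A] (act : A →ₗ[k] H →ₗ[k] A) : Prop where
  act_one : ∀ a : A, act a 1 = a
  act_mul : ∀ (a : A) (g g' : H), act a (g * g') = act (act a g) g'
  mul_act : ∀ (a a' : A) (g : H), act (a * a') g =
    LinearMap.mul' k A (TensorProduct.map (act a) (act a') (Coalgebra.comul g))
  one_act : ∀ g : H, act (1 : A) g = (Coalgebra.counit (R := k) g) • (1 : A)

/-- The cross-product (smash product) algebra `A >⋊ H`, realized as an ambient algebra `B`
containing `H` and `A` via `ιH`, `ιA`, with the straightening relation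
`a g = g₍₁₎ (a ◁ g₍₂₎)` and with `g ⊗ a ↦ ιH g * ιA a` a linear bijection `H ⊗ A ≃ B`. -/
structure SmashProduct (k : Type) [Field k] (H A B : Type) [Ring H] [Ring A] [Ring B]
    [HopfAlgebra k H] [Algebra k A] [Algebra k B]
    (act : A →ₗ[k] H →ₗ[k] A) : Type where
  ιH : H →ₐ[k] B
  ιA : A →ₐ[k] B
  straighten : ∀ (a : A) (g : H), ιA a * ιH g =
    LinearMap.mul' k B (TensorProduct.map ιH.toLinearMap (ιA.toLinearMap ∘ₗ act a)
      (Coalgebra.comul g))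
  mulMap_bij : Function.Bijective fun x : H ⊗[k] A =>
    LinearMap.mul' k B (TensorProduct.map ιH.toLinearMap ιA.toLinearMap x)

variable {k : Type} [Field k] {H A B : Type} [Ring H] [Ring A] [Ring B]
  [HopfAlgebra k H] [Algebra k A] [Algebra k B] {act : A →ₗ[k] H →ₗ[k] A}

/-- The decoupling map `ζ̃(g) = g₍₁₎ φ̃(S g₍₂₎)`, valued in `A >⋊ H`. -/
noncomputable def zeta (S : SmashProduct k H A B act) (φ : B →ₐ[k] A) : H →ₗ[k] B :=
  (LinearMap.mul' k B) ∘ₗ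
    (TensorProduct.map S.ιH.toLinearMap
      (S.ιA.toLinearMap ∘ₗ φ.toLinearMap ∘ₗ S.ιH.toLinearMap ∘ₗ
        (HopfAlgebra.antipode (R := k) (A := H)))) ∘ₗ Coalgebra.comul


/-- The commutant `C̃ = { c ∈ A >⋊ H : [c,a] = 0 for all a ∈ A }` of `A` in `A >⋊ H`,
as a `k`-submodule of `A >⋊ H`. -/
def commutant (S : SmashProduct k H A B act) : Submodule k B where
  carrier := {c : B | ∀ a : A, c * S.ιA a = S.ιA a * c}
  add_mem' := by
    intro x y hx hy a
    simp only [add_mul, mul_add, hx a, hy a]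
  zero_mem' := by intro a; simp
  smul_mem' := by
    intro c x hx a
    rw [Algebra.smul_mul_assoc, hx a, Algebra.mul_smul_comm]

section ConvCore
open Coalgebra
variable {k : Type} [Field k] {B : Type} [Ring B] [Algebra k B]
variable {C : Type} [AddCommGroup C] [Module k C] [Coalgebra k C]

/-- Convolution product on `Hom(C, B)`. -/
noncomputable def conv (f g : C →ₗ[k] B) : C →ₗ[k] B :=
  LinearMap.mul' k B ∘ₗ TensorProduct.map f g ∘ₗ Coalgebra.comul

/-- The convolution unit. -/
noncomputable def cunit : C →ₗ[k] B := Algebra.linearMap k B ∘ₗ Coalgebra.counit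

lemma conv_repr (f g : C →ₗ[k] B) (c : C) {ι : Type*} (r : Coalgebra.Repr k c ι) :
    conv f g c = ∑ i ∈ r.index, f (r.left i) * g (r.right i) := by
  simp only [conv, LinearMap.comp_apply, ← r.eq, map_sum, TensorProduct.map_tmul,
    LinearMap.mul'_apply]

lemma cunit_apply (c : C) : (cunit (k := k) (B := B)) c = algebraMap k B (Coalgebra.counit c) := rfl

lemma conv_cunit (f : C →ₗ[k] B) : conv f cunit = f := by
  ext c
  rw [conv_repr f cunit c (ℛ k c)]
  have key := sum_tmul_counit_eq (R := k) (ℛ k c)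
  apply_fun (TensorProduct.rid k C) at key
  simp only [map_sum, rid_tmul, rid_tmul, one_smul] at key
  calc ∑ i ∈ (ℛ k c).index, f ((ℛ k c).left i) * cunit ((ℛ k c).right i)
      = ∑ i ∈ (ℛ k c).index, f (Coalgebra.counit (R := k) ((ℛ k c).right i) • (ℛ k c).left i) := by
        refine Finset.sum_congr rfl fun i _ => ?_
        rw [map_smul, cunit_apply, ← Algebra.commutes, ← Algebra.smul_def]
    _ = f c := by rw [← map_sum, key]

lemma cunit_conv (f : C →ₗ[k] B) : conv cunit f = f := by
  ext c
  rw [conv_repr cunit f c (ℛ k c)]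
  have key := sum_counit_tmul_eq (R := k) (ℛ k c)
  apply_fun (TensorProduct.lid k C) at key
  simp only [map_sum, lid_tmul, one_smul] at key
  calc ∑ i ∈ (ℛ k c).index, cunit ((ℛ k c).left i) * f ((ℛ k c).right i)
      = ∑ i ∈ (ℛ k c).index, f (Coalgebra.counit (R := k) ((ℛ k c).left i) • (ℛ k c).right i) := by
        refine Finset.sum_congr rfl fun i _ => ?_
        rw [map_smul, cunit_apply, ← Algebra.smul_def]
    _ = f c := by rw [← map_sum, key]

lemma conv_assoc (f g h : C →ₗ[k] B) : conv (conv f g) h = conv f (conv g h) := by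
  ext c
  set r := ℛ k c with hr
  have key := sum_tmul_tmul_eq (R := k) r (fun i => ℛ k (r.left i)) (fun i => ℛ k (r.right i))
  apply_fun (LinearMap.mul' k B ∘ₗ TensorProduct.map f (LinearMap.mul' k B ∘ₗ TensorProduct.map g h)) at key
  simp only [map_sum, LinearMap.comp_apply, TensorProduct.map_tmul, LinearMap.mul'_apply] at key
  rw [conv_repr _ h c r, conv_repr f _ c r]
  calc ∑ i ∈ r.index, (conv f g) (r.left i) * h (r.right i)
      = ∑ i ∈ r.index, ∑ j ∈ (ℛ k (r.left i)).index,
          f ((ℛ k (r.left i)).left j) * (g ((ℛ k (r.left i)).right j) * h (r.right i)) := by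
        refine Finset.sum_congr rfl fun i _ => ?_
        rw [conv_repr f g _ (ℛ k (r.left i)), Finset.sum_mul]
        exact Finset.sum_congr rfl fun j _ => mul_assoc _ _ _
    _ = ∑ i ∈ r.index, f (r.left i) * (conv g h) (r.right i) := by
        rw [key]
        refine Finset.sum_congr rfl fun i _ => ?_
        rw [conv_repr g h _ (ℛ k (r.right i)), Finset.mul_sum]

lemma conv_cancel_right (f₁ f₂ g g' : C →ₗ[k] B) (hgg' : conv g g' = cunit)
    (h : conv f₁ g = conv f₂ g) : f₁ = f₂ := by
  have e : ∀ f : C →ₗ[k] B, conv (conv f g) g' = f := fun f => by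
    rw [conv_assoc, hgg', conv_cunit]
  rw [← e f₁, h, e f₂]

lemma conv_mulLeft (x : B) (f g : C →ₗ[k] B) :
    conv (LinearMap.mulLeft k x ∘ₗ f) g = LinearMap.mulLeft k x ∘ₗ conv f g := by
  ext c
  rw [LinearMap.comp_apply, conv_repr _ g c (ℛ k c), conv_repr f g c (ℛ k c),
    LinearMap.mulLeft_apply, Finset.mul_sum]
  exact Finset.sum_congr rfl fun i _ => by simp [mul_assoc]

lemma conv_mulRight_mulLeft (x : B) (f g : C →ₗ[k] B) :
    conv (LinearMap.mulRight k x ∘ₗ f) g = conv f (LinearMap.mulLeft k x ∘ₗ g) := by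
  ext c
  rw [conv_repr _ g c (ℛ k c), conv_repr f _ c (ℛ k c)]
  exact Finset.sum_congr rfl fun i _ => by simp [mul_assoc]
end ConvCore
section ConvAux
open Coalgebra
variable {k : Type} [Field k] {B : Type} [Ring B] [Algebra k B]
variable {C : Type} [AddCommGroup C] [Module k C] [Coalgebra k C]

lemma hopf_antipode_one {H : Type} [Ring H] [HopfAlgebra k H] :
    HopfAlgebra.antipode (R := k) (A := H) 1 = 1 := by
  have := HopfAlgebra.mul_antipode_rTensor_comul_apply (R := k) (A := H) 1
  rw [Bialgebra.comul_one, Algebra.TensorProduct.one_def] at this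
  simpa using this

end ConvAux

section SmashAux
open Coalgebra

variable {k : Type} [Field k] {H A B : Type} [Ring H] [Ring A] [Ring B]
  [HopfAlgebra k H] [Algebra k A] [Algebra k B] {act : A →ₗ[k] H →ₗ[k] A}

variable (S : SmashProduct k H A B act) (φ : B →ₐ[k] A)

/-- `ψ = φ ∘ ιH : H → A`. -/
noncomputable def psiMap : H →ₐ[k] A := φ.comp S.ιH

/-- `ιA ∘ ψ : H → B`. -/
noncomputable def iPsi : H →ₗ[k] B := S.ιA.toLinearMap ∘ₗ (psiMap S φ).toLinearMap

/-- `ιA ∘ ψ ∘ S : H → B`. -/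
noncomputable def iPsiS : H →ₗ[k] B :=
  iPsi S φ ∘ₗ HopfAlgebra.antipode (R := k) (A := H)

lemma zeta_eq_conv : zeta S φ = conv S.ιH.toLinearMap (iPsiS S φ) := by
  rfl

lemma zeta_repr (g : H) {ι : Type*} (r : Coalgebra.Repr k g ι) :
    zeta S φ g = ∑ i ∈ r.index,
      S.ιH (r.left i) * S.ιA (psiMap S φ (HopfAlgebra.antipode (R := k) (r.right i))) := by
  rw [zeta_eq_conv, conv_repr _ _ g r]; rfl

lemma conv_iPsi_iPsiS : conv (iPsi S φ) (iPsiS S φ) = cunit := by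
  ext g
  rw [conv_repr _ _ g (ℛ k g), cunit_apply]
  have key := HopfAlgebra.sum_mul_antipode_eq_algebraMap_counit (R := k) (ℛ k g)
  calc ∑ i ∈ (ℛ k g).index, iPsi S φ ((ℛ k g).left i) * iPsiS S φ ((ℛ k g).right i)
      = S.ιA (psiMap S φ (∑ i ∈ (ℛ k g).index,
          (ℛ k g).left i * HopfAlgebra.antipode (R := k) ((ℛ k g).right i))) := by
        rw [map_sum, map_sum]
        exact Finset.sum_congr rfl fun i _ => by simp [iPsi, iPsiS, map_mul]
    _ = algebraMap k B (Coalgebra.counit (R := k) g) := by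
        rw [key, AlgHom.commutes, AlgHom.commutes]

lemma conv_iPsiS_iPsi : conv (iPsiS S φ) (iPsi S φ) = cunit := by
  ext g
  rw [conv_repr _ _ g (ℛ k g), cunit_apply]
  have key := HopfAlgebra.sum_antipode_mul_eq_algebraMap_counit (R := k) (ℛ k g)
  calc ∑ i ∈ (ℛ k g).index, iPsiS S φ ((ℛ k g).left i) * iPsi S φ ((ℛ k g).right i)
      = S.ιA (psiMap S φ (∑ i ∈ (ℛ k g).index,
          HopfAlgebra.antipode (R := k) ((ℛ k g).left i) * (ℛ k g).right i)) := by
        rw [map_sum, map_sum]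
        exact Finset.sum_congr rfl fun i _ => by simp [iPsi, iPsiS, map_mul]
    _ = algebraMap k B (Coalgebra.counit (R := k) g) := by
        rw [key, AlgHom.commutes, AlgHom.commutes]

lemma conv_zeta_iPsi : conv (zeta S φ) (iPsi S φ) = S.ιH.toLinearMap := by
  rw [zeta_eq_conv, conv_assoc, conv_iPsiS_iPsi, conv_cunit]

lemma straighten_repr (a : A) (g : H) {ι : Type*} (r : Coalgebra.Repr k g ι) :
    S.ιA a * S.ιH g = ∑ i ∈ r.index, S.ιH (r.left i) * S.ιA (act a (r.right i)) := by
  have hs := S.straighten a g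
  rw [← r.eq] at hs
  simpa using hs

lemma phi_rel (hφ : ∀ a : A, φ (S.ιA a) = a) (a : A) (g : H) {ι : Type*} (r : Coalgebra.Repr k g ι) :
    a * psiMap S φ g = ∑ i ∈ r.index, psiMap S φ (r.left i) * act a (r.right i) := by
  have hs := straighten_repr S a g r
  apply_fun φ at hs
  rw [map_mul, map_sum, hφ] at hs
  calc a * psiMap S φ g = φ (S.ιA a) * φ (S.ιH g) := by rw [hφ]; rfl
    _ = ∑ i ∈ r.index, psiMap S φ (r.left i) * act a (r.right i) := by
        rw [← map_mul, map_mul, hφ, hs]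
        exact Finset.sum_congr rfl fun i _ => by rw [map_mul, hφ]; rfl

end SmashAux
section SmashAux2
open Coalgebra

variable {k : Type} [Field k] {H A B : Type} [Ring H] [Ring A] [Ring B]
  [HopfAlgebra k H] [Algebra k A] [Algebra k B] {act : A →ₗ[k] H →ₗ[k] A}

variable (S : SmashProduct k H A B act) (φ : B →ₐ[k] A)

lemma key_dagger (hφ : ∀ a : A, φ (S.ιA a) = a) (a : A) :
    conv (zeta S φ) (LinearMap.mulLeft k (S.ιA a) ∘ₗ iPsi S φ) =
      LinearMap.mulLeft k (S.ιA a) ∘ₗ S.ιH.toLinearMap := by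
  ext g
  set r := ℛ k g with hr
  set a₁ : (i : H × H) → Coalgebra.Repr k (r.left i) (H × H) := fun i => ℛ k (r.left i) with ha₁
  set a₂ : (i : H × H) → Coalgebra.Repr k (r.right i) (H × H) := fun i => ℛ k (r.right i) with ha₂
  have key := sum_tmul_tmul_eq (R := k) r a₁ a₂
  apply_fun (LinearMap.mul' k B ∘ₗ TensorProduct.map (zeta S φ)
    (LinearMap.mul' k B ∘ₗ TensorProduct.map (iPsi S φ) (S.ιA.toLinearMap ∘ₗ act a))) at key
  simp only [map_sum, LinearMap.comp_apply, TensorProduct.map_tmul, LinearMap.mul'_apply,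
    AlgHom.toLinearMap_apply] at key
  calc conv (zeta S φ) (LinearMap.mulLeft k (S.ιA a) ∘ₗ iPsi S φ) g
      = ∑ i ∈ r.index, zeta S φ (r.left i) * (S.ιA a * iPsi S φ (r.right i)) := by
        rw [conv_repr _ _ g r]; rfl
    _ = ∑ i ∈ r.index, zeta S φ (r.left i) * S.ιA (a * psiMap S φ (r.right i)) := by
        refine Finset.sum_congr rfl fun i _ => ?_
        rw [map_mul]; rfl
    _ = ∑ i ∈ r.index, ∑ j ∈ (a₂ i).index, zeta S φ (r.left i) *
          (iPsi S φ ((a₂ i).left j) * S.ιA (act a ((a₂ i).right j))) := by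
        refine Finset.sum_congr rfl fun i _ => ?_
        rw [phi_rel S φ hφ a (r.right i) (a₂ i), map_sum, Finset.mul_sum]
        refine Finset.sum_congr rfl fun j _ => ?_
        rw [map_mul]; rfl
    _ = ∑ i ∈ r.index, ∑ j ∈ (a₁ i).index, zeta S φ ((a₁ i).left j) *
          (iPsi S φ ((a₁ i).right j) * S.ιA (act a (r.right i))) := key.symm
    _ = ∑ i ∈ r.index, (∑ j ∈ (a₁ i).index,
          zeta S φ ((a₁ i).left j) * iPsi S φ ((a₁ i).right j)) * S.ιA (act a (r.right i)) := by
        refine Finset.sum_congr rfl fun i _ => ?_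
        rw [Finset.sum_mul]
        exact Finset.sum_congr rfl fun j _ => (mul_assoc _ _ _).symm
    _ = ∑ i ∈ r.index, S.ιH (r.left i) * S.ιA (act a (r.right i)) := by
        refine Finset.sum_congr rfl fun i _ => ?_
        rw [← conv_repr _ _ _ (a₁ i), conv_zeta_iPsi S φ]; rfl
    _ = S.ιA a * S.ιH g := (straighten_repr S a g r).symm
    _ = (LinearMap.mulLeft k (S.ιA a) ∘ₗ S.ιH.toLinearMap) g := rfl

lemma zeta_commutes (hφ : ∀ a : A, φ (S.ιA a) = a) (a : A) (g : H) :
    S.ιA a * zeta S φ g = zeta S φ g * S.ιA a := by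
  have h1 : conv (LinearMap.mulLeft k (S.ιA a) ∘ₗ zeta S φ) (iPsi S φ) =
      LinearMap.mulLeft k (S.ιA a) ∘ₗ S.ιH.toLinearMap := by
    rw [conv_mulLeft, conv_zeta_iPsi]
  have h2 : conv (LinearMap.mulRight k (S.ιA a) ∘ₗ zeta S φ) (iPsi S φ) =
      LinearMap.mulLeft k (S.ιA a) ∘ₗ S.ιH.toLinearMap := by
    rw [conv_mulRight_mulLeft, key_dagger S φ hφ]
  have := conv_cancel_right _ _ _ _ (conv_iPsi_iPsiS S φ) (h1.trans h2.symm)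
  exact LinearMap.congr_fun this g

lemma zeta_one : zeta S φ 1 = 1 := by
  have : Coalgebra.comul (R := k) (1 : H) = 1 ⊗ₜ[k] 1 := by
    rw [Bialgebra.comul_one, Algebra.TensorProduct.one_def]
  rw [zeta_eq_conv]
  simp only [conv, LinearMap.comp_apply, this, TensorProduct.map_tmul, LinearMap.mul'_apply]
  simp [iPsiS, iPsi, hopf_antipode_one, map_one]

/-- A `Repr` of a product from `Repr`s of the factors. -/
noncomputable def reprMul (g g' : H) {ι ι' : Type*} (r : Coalgebra.Repr k g ι) (r' : Coalgebra.Repr k g' ι') :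
    Coalgebra.Repr k (g * g') (ι × ι') where
  index := r.index ×ˢ r'.index
  left p := r.left p.1 * r'.left p.2
  right p := r.right p.1 * r'.right p.2
  eq := by
    rw [Finset.sum_product, Bialgebra.comul_mul, ← r.eq, ← r'.eq, Finset.sum_mul_sum]
    exact Finset.sum_congr rfl fun i _ => Finset.sum_congr rfl fun j _ =>
      (Algebra.TensorProduct.tmul_mul_tmul _ _ _ _).symm

lemma conv_repr_mul (f h : H →ₗ[k] B) (x y : H) :
    conv f h (x * y) = ∑ i ∈ (ℛ k x).index, ∑ j ∈ (ℛ k y).index,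
      f ((ℛ k x).left i * (ℛ k y).left j) * h ((ℛ k x).right i * (ℛ k y).right j) := by
  rw [conv_repr f h (x * y) (reprMul x y (ℛ k x) (ℛ k y))]
  show ∑ p ∈ (ℛ k x).index ×ˢ (ℛ k y).index,
      f ((ℛ k x).left p.1 * (ℛ k y).left p.2) * h ((ℛ k x).right p.1 * (ℛ k y).right p.2) = _
  exact Finset.sum_product (s := (ℛ k x).index) (t := (ℛ k y).index)
    (f := fun p => f ((ℛ k x).left p.1 * (ℛ k y).left p.2) *
      h ((ℛ k x).right p.1 * (ℛ k y).right p.2))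

lemma conv_tmul (f h : H ⊗[k] H →ₗ[k] B) (g g' : H)
    {ι ι' : Type*} (r : Coalgebra.Repr k g ι) (r' : Coalgebra.Repr k g' ι') :
    conv f h (g ⊗ₜ[k] g') = ∑ i ∈ r.index, ∑ j ∈ r'.index,
      f (r.left i ⊗ₜ[k] r'.left j) * h (r.right i ⊗ₜ[k] r'.right j) := by
  have hc : Coalgebra.comul (R := k) (g ⊗ₜ[k] g') =
      TensorProduct.tensorTensorTensorComm k H H H H
        (TensorProduct.map Coalgebra.comul Coalgebra.comul (g ⊗ₜ g')) := by simp; rfl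
  rw [conv, LinearMap.comp_apply, LinearMap.comp_apply, hc, TensorProduct.map_tmul,
    ← r.eq, ← r'.eq, TensorProduct.sum_tmul]
  simp only [TensorProduct.tmul_sum, map_sum, TensorProduct.tensorTensorTensorComm_tmul,
    TensorProduct.map_tmul, LinearMap.mul'_apply]

lemma iPsi_mul (x y : H) : iPsi S φ (x * y) = iPsi S φ x * iPsi S φ y := by
  simp [iPsi, map_mul]

lemma zeta_mul (hφ : ∀ a : A, φ (S.ιA a) = a) (g g' : H) :
    zeta S φ (g * g') = zeta S φ g * zeta S φ g' := by
  have hGG' : conv (iPsi S φ ∘ₗ LinearMap.mul' k H) (iPsiS S φ ∘ₗ LinearMap.mul' k H) =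
      (cunit : H ⊗[k] H →ₗ[k] B) := by
    apply TensorProduct.ext'
    intro x y
    rw [conv_tmul _ _ x y (ℛ k x) (ℛ k y)]
    calc ∑ i ∈ (ℛ k x).index, ∑ j ∈ (ℛ k y).index,
          (iPsi S φ ∘ₗ LinearMap.mul' k H) ((ℛ k x).left i ⊗ₜ[k] (ℛ k y).left j) *
          (iPsiS S φ ∘ₗ LinearMap.mul' k H) ((ℛ k x).right i ⊗ₜ[k] (ℛ k y).right j)
        = conv (iPsi S φ) (iPsiS S φ) (x * y) := by rw [conv_repr_mul]; rfl
      _ = cunit (x ⊗ₜ[k] y) := by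
          rw [conv_iPsi_iPsiS S φ, cunit_apply, cunit_apply]
          congr 1
          simp [Bialgebra.counit_mul, mul_comm]
  have hF : conv (zeta S φ ∘ₗ LinearMap.mul' k H) (iPsi S φ ∘ₗ LinearMap.mul' k H) =
      conv (LinearMap.mul' k B ∘ₗ TensorProduct.map (zeta S φ) (zeta S φ))
        (iPsi S φ ∘ₗ LinearMap.mul' k H) := by
    apply TensorProduct.ext'
    intro x y
    rw [conv_tmul _ _ x y (ℛ k x) (ℛ k y), conv_tmul _ _ x y (ℛ k x) (ℛ k y)]
    have hL : ∑ i ∈ (ℛ k x).index, ∑ j ∈ (ℛ k y).index,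
          (zeta S φ ∘ₗ LinearMap.mul' k H) ((ℛ k x).left i ⊗ₜ[k] (ℛ k y).left j) *
          (iPsi S φ ∘ₗ LinearMap.mul' k H) ((ℛ k x).right i ⊗ₜ[k] (ℛ k y).right j)
        = S.ιH x * S.ιH y := by
      calc ∑ i ∈ (ℛ k x).index, ∑ j ∈ (ℛ k y).index,
            (zeta S φ ∘ₗ LinearMap.mul' k H) ((ℛ k x).left i ⊗ₜ[k] (ℛ k y).left j) *
            (iPsi S φ ∘ₗ LinearMap.mul' k H) ((ℛ k x).right i ⊗ₜ[k] (ℛ k y).right j)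
          = conv (zeta S φ) (iPsi S φ) (x * y) := by rw [conv_repr_mul]; rfl
        _ = S.ιH x * S.ιH y := by rw [conv_zeta_iPsi S φ]; exact map_mul S.ιH x y
    rw [hL]
    have hR : ∀ i ∈ (ℛ k x).index, ∀ j ∈ (ℛ k y).index,
        (LinearMap.mul' k B ∘ₗ TensorProduct.map (zeta S φ) (zeta S φ))
            ((ℛ k x).left i ⊗ₜ[k] (ℛ k y).left j) *
          (iPsi S φ ∘ₗ LinearMap.mul' k H) ((ℛ k x).right i ⊗ₜ[k] (ℛ k y).right j)
        = (zeta S φ ((ℛ k x).left i) * iPsi S φ ((ℛ k x).right i)) *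
          (zeta S φ ((ℛ k y).left j) * iPsi S φ ((ℛ k y).right j)) := by
      intro i _ j _
      have hcomm : zeta S φ ((ℛ k y).left j) * iPsi S φ ((ℛ k x).right i)
          = iPsi S φ ((ℛ k x).right i) * zeta S φ ((ℛ k y).left j) :=
        (zeta_commutes S φ hφ (psiMap S φ ((ℛ k x).right i)) ((ℛ k y).left j)).symm
      calc (LinearMap.mul' k B ∘ₗ TensorProduct.map (zeta S φ) (zeta S φ))
              ((ℛ k x).left i ⊗ₜ[k] (ℛ k y).left j) *
            (iPsi S φ ∘ₗ LinearMap.mul' k H) ((ℛ k x).right i ⊗ₜ[k] (ℛ k y).right j)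
          = (zeta S φ ((ℛ k x).left i) * zeta S φ ((ℛ k y).left j)) *
            (iPsi S φ ((ℛ k x).right i) * iPsi S φ ((ℛ k y).right j)) := by
            simp only [LinearMap.comp_apply, TensorProduct.map_tmul, LinearMap.mul'_apply,
              iPsi_mul]
        _ = (zeta S φ ((ℛ k x).left i) * iPsi S φ ((ℛ k x).right i)) *
            (zeta S φ ((ℛ k y).left j) * iPsi S φ ((ℛ k y).right j)) := by
            rw [mul_assoc, ← mul_assoc (zeta S φ ((ℛ k y).left j)), hcomm, mul_assoc,
              ← mul_assoc]
    rw [Finset.sum_congr rfl fun i hi => Finset.sum_congr rfl fun j hj => hR i hi j hj,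
      ← Finset.sum_mul_sum, ← conv_repr _ _ x (ℛ k x), ← conv_repr _ _ y (ℛ k y),
      conv_zeta_iPsi S φ]
    rfl
  have := conv_cancel_right _ _ _ _ hGG' hF
  have happ := LinearMap.congr_fun this (g ⊗ₜ[k] g')
  simpa using happ

end SmashAux2
section SmashAux3
open Coalgebra

variable {k : Type} [Field k] {H A B : Type} [Ring H] [Ring A] [Ring B]
  [HopfAlgebra k H] [Algebra k A] [Algebra k B] {act : A →ₗ[k] H →ₗ[k] A}

lemma helper_scalar (g : H) :
    ∑ i ∈ (ℛ k g).index,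
      Coalgebra.counit (R := k) ((ℛ k g).right i) • ((ℛ k g).left i ⊗ₜ[k] (1 : H))
      = g ⊗ₜ[k] (1 : H) := by
  have key2 := sum_tmul_counit_eq (R := k) (ℛ k g)
  apply_fun (LinearMap.lTensor H (Algebra.linearMap k H)) at key2
  simp only [map_sum, LinearMap.lTensor_tmul, Algebra.linearMap_apply, map_one,
    Algebra.algebraMap_eq_smul_one, TensorProduct.tmul_smul] at key2
  simpa using key2

lemma helper1 (g : H) :
    ∑ i ∈ (ℛ k g).index, ∑ j ∈ (ℛ k ((ℛ k g).left i)).index,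
      (ℛ k ((ℛ k g).left i)).left j ⊗ₜ[k]
        (HopfAlgebra.antipode (R := k) ((ℛ k ((ℛ k g).left i)).right j) * (ℛ k g).right i)
      = g ⊗ₜ[k] (1 : H) := by
  have key := sum_tmul_tmul_eq (R := k) (ℛ k g) (fun i => ℛ k ((ℛ k g).left i))
    (fun i => ℛ k ((ℛ k g).right i))
  apply_fun (LinearMap.lTensor H (LinearMap.mul' k H ∘ₗ
    LinearMap.rTensor H (HopfAlgebra.antipode (R := k) (A := H)))) at key
  simp only [map_sum, LinearMap.lTensor_tmul, LinearMap.comp_apply, LinearMap.rTensor_tmul,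
    LinearMap.mul'_apply] at key
  rw [key]
  have hc : ∀ i ∈ (ℛ k g).index, ∑ j ∈ (ℛ k ((ℛ k g).right i)).index,
      (ℛ k g).left i ⊗ₜ[k] (HopfAlgebra.antipode (R := k) ((ℛ k ((ℛ k g).right i)).left j) *
        (ℛ k ((ℛ k g).right i)).right j)
      = Coalgebra.counit (R := k) ((ℛ k g).right i) • ((ℛ k g).left i ⊗ₜ[k] (1 : H)) := by
    intro i _
    rw [← TensorProduct.tmul_sum, HopfAlgebra.sum_antipode_mul_eq_smul, TensorProduct.tmul_smul]
  rw [Finset.sum_congr rfl hc]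
  exact helper_scalar g

lemma helper2 (g : H) :
    ∑ i ∈ (ℛ k g).index, ∑ j ∈ (ℛ k ((ℛ k g).left i)).index,
      (ℛ k ((ℛ k g).left i)).left j ⊗ₜ[k]
        ((ℛ k ((ℛ k g).left i)).right j * HopfAlgebra.antipode (R := k) ((ℛ k g).right i))
      = g ⊗ₜ[k] (1 : H) := by
  have key := sum_tmul_tmul_eq (R := k) (ℛ k g) (fun i => ℛ k ((ℛ k g).left i))
    (fun i => ℛ k ((ℛ k g).right i))
  apply_fun (LinearMap.lTensor H (LinearMap.mul' k H ∘ₗ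
    LinearMap.lTensor H (HopfAlgebra.antipode (R := k) (A := H)))) at key
  simp only [map_sum, LinearMap.lTensor_tmul, LinearMap.comp_apply,
    LinearMap.mul'_apply] at key
  rw [key]
  have hc : ∀ i ∈ (ℛ k g).index, ∑ j ∈ (ℛ k ((ℛ k g).right i)).index,
      (ℛ k g).left i ⊗ₜ[k] ((ℛ k ((ℛ k g).right i)).left j *
        HopfAlgebra.antipode (R := k) ((ℛ k ((ℛ k g).right i)).right j))
      = Coalgebra.counit (R := k) ((ℛ k g).right i) • ((ℛ k g).left i ⊗ₜ[k] (1 : H)) := by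
    intro i _
    rw [← TensorProduct.tmul_sum, HopfAlgebra.sum_mul_antipode_eq_smul, TensorProduct.tmul_smul]
  rw [Finset.sum_congr rfl hc]
  exact helper_scalar g

variable (S : SmashProduct k H A B act) (φ : B →ₐ[k] A)

/-- `g ↦ Σ g₁ ⊗ ψ(S g₂)`. -/
noncomputable def deltaS : H →ₗ[k] H ⊗[k] A :=
  TensorProduct.map LinearMap.id
    ((psiMap S φ).toLinearMap ∘ₗ HopfAlgebra.antipode (R := k)) ∘ₗ Coalgebra.comul

/-- `g ↦ Σ g₁ ⊗ ψ(g₂)`. -/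
noncomputable def deltaP : H →ₗ[k] H ⊗[k] A :=
  TensorProduct.map LinearMap.id (psiMap S φ).toLinearMap ∘ₗ Coalgebra.comul

/-- `g ⊗ a ↦ Σ g₁ ⊗ ψ(S g₂) a`. -/
noncomputable def Tmap : H ⊗[k] A →ₗ[k] H ⊗[k] A :=
  LinearMap.lTensor H (LinearMap.mul' k A) ∘ₗ (TensorProduct.assoc k H A A).toLinearMap ∘ₗ
    LinearMap.rTensor A (deltaS S φ)

/-- `g ⊗ a ↦ Σ g₁ ⊗ ψ(g₂) a`. -/
noncomputable def T'map : H ⊗[k] A →ₗ[k] H ⊗[k] A :=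
  LinearMap.lTensor H (LinearMap.mul' k A) ∘ₗ (TensorProduct.assoc k H A A).toLinearMap ∘ₗ
    LinearMap.rTensor A (deltaP S φ)

lemma Tmap_tmul (g : H) (a : A) {ι : Type*} (r : Coalgebra.Repr k g ι) :
    Tmap S φ (g ⊗ₜ[k] a) = ∑ i ∈ r.index,
      r.left i ⊗ₜ[k] (psiMap S φ (HopfAlgebra.antipode (R := k) (r.right i)) * a) := by
  simp only [Tmap, deltaS, LinearMap.comp_apply, LinearMap.rTensor_tmul, ← r.eq, map_sum,
    TensorProduct.map_tmul, TensorProduct.sum_tmul, LinearEquiv.coe_coe,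
    TensorProduct.assoc_tmul, LinearMap.lTensor_tmul, LinearMap.mul'_apply, LinearMap.id_coe,
    id_eq, AlgHom.toLinearMap_apply]

lemma T'map_tmul (g : H) (a : A) {ι : Type*} (r : Coalgebra.Repr k g ι) :
    T'map S φ (g ⊗ₜ[k] a) = ∑ i ∈ r.index,
      r.left i ⊗ₜ[k] (psiMap S φ (r.right i) * a) := by
  simp only [T'map, deltaP, LinearMap.comp_apply, LinearMap.rTensor_tmul, ← r.eq, map_sum,
    TensorProduct.map_tmul, TensorProduct.sum_tmul, LinearEquiv.coe_coe,
    TensorProduct.assoc_tmul, LinearMap.lTensor_tmul, LinearMap.mul'_apply, LinearMap.id_coe,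
    id_eq, AlgHom.toLinearMap_apply]

lemma Tmap_T'map : Tmap S φ ∘ₗ T'map S φ = LinearMap.id := by
  apply TensorProduct.ext'
  intro g a
  rw [LinearMap.comp_apply, T'map_tmul S φ g a (ℛ k g), map_sum]
  have step : ∀ i ∈ (ℛ k g).index,
      Tmap S φ ((ℛ k g).left i ⊗ₜ[k] (psiMap S φ ((ℛ k g).right i) * a)) =
      ∑ j ∈ (ℛ k ((ℛ k g).left i)).index,
        (ℛ k ((ℛ k g).left i)).left j ⊗ₜ[k]
          (psiMap S φ (HopfAlgebra.antipode (R := k) ((ℛ k ((ℛ k g).left i)).right j) *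
            (ℛ k g).right i) * a) := by
    intro i _
    rw [Tmap_tmul S φ _ _ (ℛ k ((ℛ k g).left i))]
    exact Finset.sum_congr rfl fun j _ => by rw [map_mul, mul_assoc]
  rw [Finset.sum_congr rfl step]
  have key := helper1 (k := k) g
  apply_fun (LinearMap.lTensor H (LinearMap.mulRight k a ∘ₗ (psiMap S φ).toLinearMap)) at key
  simp only [map_sum, LinearMap.lTensor_tmul, LinearMap.comp_apply, AlgHom.toLinearMap_apply,
    LinearMap.mulRight_apply, map_one, one_mul] at key
  rw [key, LinearMap.id_apply]

lemma T'map_Tmap : T'map S φ ∘ₗ Tmap S φ = LinearMap.id := by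
  apply TensorProduct.ext'
  intro g a
  rw [LinearMap.comp_apply, Tmap_tmul S φ g a (ℛ k g), map_sum]
  have step : ∀ i ∈ (ℛ k g).index,
      T'map S φ ((ℛ k g).left i ⊗ₜ[k]
        (psiMap S φ (HopfAlgebra.antipode (R := k) ((ℛ k g).right i)) * a)) =
      ∑ j ∈ (ℛ k ((ℛ k g).left i)).index,
        (ℛ k ((ℛ k g).left i)).left j ⊗ₜ[k]
          (psiMap S φ ((ℛ k ((ℛ k g).left i)).right j *
            HopfAlgebra.antipode (R := k) ((ℛ k g).right i)) * a) := by
    intro i _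
    rw [T'map_tmul S φ _ _ (ℛ k ((ℛ k g).left i))]
    exact Finset.sum_congr rfl fun j _ => by rw [map_mul, mul_assoc]
  rw [Finset.sum_congr rfl step]
  have key := helper2 (k := k) g
  apply_fun (LinearMap.lTensor H (LinearMap.mulRight k a ∘ₗ (psiMap S φ).toLinearMap)) at key
  simp only [map_sum, LinearMap.lTensor_tmul, LinearMap.comp_apply, AlgHom.toLinearMap_apply,
    LinearMap.mulRight_apply, map_one, one_mul] at key
  rw [key, LinearMap.id_apply]

lemma Tmap_bijective : Function.Bijective (Tmap S φ) :=
  Function.bijective_iff_has_inverse.2 ⟨T'map S φ,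
    fun x => LinearMap.congr_fun (T'map_Tmap S φ) x,
    fun x => LinearMap.congr_fun (Tmap_T'map S φ) x⟩

/-- The multiplication map `H ⊗ A → B` as a linear map. -/
noncomputable def Theta : H ⊗[k] A →ₗ[k] B :=
  LinearMap.mul' k B ∘ₗ TensorProduct.map S.ιH.toLinearMap S.ιA.toLinearMap

lemma Theta_bijective : Function.Bijective (Theta S) := S.mulMap_bij

/-- `g ⊗ a ↦ ζ(g) ιA(a)`. -/
noncomputable def ThetaT : H ⊗[k] A →ₗ[k] B := Theta S ∘ₗ Tmap S φ

lemma ThetaT_tmul (g : H) (a : A) :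
    ThetaT S φ (g ⊗ₜ[k] a) = zeta S φ g * S.ιA a := by
  rw [ThetaT, LinearMap.comp_apply, Tmap_tmul S φ g a (ℛ k g), map_sum,
    zeta_repr S φ g (ℛ k g), Finset.sum_mul]
  refine Finset.sum_congr rfl fun i _ => ?_
  simp only [Theta, LinearMap.comp_apply, TensorProduct.map_tmul, LinearMap.mul'_apply,
    AlgHom.toLinearMap_apply, map_mul, mul_assoc]

lemma ThetaT_bijective : Function.Bijective (ThetaT S φ) := by
  have : ⇑(ThetaT S φ) = ⇑(Theta S) ∘ ⇑(Tmap S φ) := rfl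
  rw [this]
  exact (Theta_bijective S).comp (Tmap_bijective S φ)

end SmashAux3
section LinAlgAux
open scoped Classical

variable {k : Type} [Field k] {H A : Type} [AddCommGroup H] [AddCommGroup A]
  [Module k H] [Module k A]

/-- Decomposition of `H ⊗ A` along a basis of `H`. -/
noncomputable def leftEquiv :
    H ⊗[k] A ≃ₗ[k] (Module.Basis.ofVectorSpaceIndex k H) →₀ A :=
  (TensorProduct.congr (Module.Basis.ofVectorSpace k H).repr (LinearEquiv.refl k A)).trans
    (TensorProduct.finsuppScalarLeft k A _)

/-- Decomposition of `H ⊗ A` along a basis of `A`. -/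
noncomputable def rightEquiv :
    H ⊗[k] A ≃ₗ[k] (Module.Basis.ofVectorSpaceIndex k A) →₀ H :=
  (TensorProduct.congr (LinearEquiv.refl k H) (Module.Basis.ofVectorSpace k A).repr).trans
    (TensorProduct.finsuppScalarRight k k H _)

lemma leftEquiv_lTensor (f : A →ₗ[k] A) (t : H ⊗[k] A) (i) :
    leftEquiv (LinearMap.lTensor H f t) i = f (leftEquiv t i) := by
  induction t using TensorProduct.induction_on with
  | zero => simp
  | tmul g a =>
      simp [leftEquiv, TensorProduct.congr_tmul, map_smul,
        TensorProduct.finsuppScalarLeft_apply_tmul_apply]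
  | add x y hx hy => simp only [map_add, Finsupp.add_apply, hx, hy]

lemma rightEquiv_rTensor (f : H →ₗ[k] H) (t : H ⊗[k] A) (i) :
    rightEquiv (LinearMap.rTensor A f t) i = f (rightEquiv t i) := by
  induction t using TensorProduct.induction_on with
  | zero => simp
  | tmul g a =>
      simp [rightEquiv, TensorProduct.congr_tmul, map_smul,
        TensorProduct.finsuppScalarRight_apply_tmul_apply]
  | add x y hx hy => simp only [map_add, Finsupp.add_apply, hx, hy]

lemma mem_span_of_leftEquiv (V : Submodule k A) (t : H ⊗[k] A)
    (h : ∀ i, leftEquiv t i ∈ V) :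
    t ∈ Submodule.span k {x : H ⊗[k] A | ∃ (g : H) (a : A), a ∈ V ∧ x = g ⊗ₜ[k] a} := by
  have hrec : ∀ f : (Module.Basis.ofVectorSpaceIndex k H) →₀ A, (∀ i, f i ∈ V) →
      (leftEquiv (k := k)).symm f ∈
        Submodule.span k {x : H ⊗[k] A | ∃ (g : H) (a : A), a ∈ V ∧ x = g ⊗ₜ[k] a} := by
    intro f
    induction f using Finsupp.induction with
    | zero => intro _; simp only [map_zero]; exact Submodule.zero_mem _
    | single_add i b f hi hb ih =>
        intro hmem
        rw [map_add]
        refine Submodule.add_mem _ ?_ (ih fun j => ?_)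
        · have hb' : b ∈ V := by
            have := hmem i
            rwa [Finsupp.add_apply, Finsupp.single_eq_same, Finsupp.notMem_support_iff.1 hi,
              add_zero] at this
          have : (leftEquiv (k := k)).symm (Finsupp.single i b) =
              ((Module.Basis.ofVectorSpace k H).repr.symm (Finsupp.single i 1)) ⊗ₜ[k] b := by
            simp [leftEquiv, TensorProduct.finsuppScalarLeft_symm_apply_single]
          rw [this]
          exact Submodule.subset_span ⟨_, b, hb', rfl⟩
        · by_cases hji : j = i
          · subst hji; rw [Finsupp.notMem_support_iff.1 hi]; exact V.zero_mem
          · have := hmem j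
            rwa [Finsupp.add_apply, Finsupp.single_eq_of_ne hji, zero_add] at this
  have := hrec (leftEquiv t) h
  rwa [LinearEquiv.symm_apply_apply] at this

lemma mem_span_of_rightEquiv (U : Submodule k H) (t : H ⊗[k] A)
    (h : ∀ i, rightEquiv t i ∈ U) :
    t ∈ Submodule.span k {x : H ⊗[k] A | ∃ (g : H) (a : A), g ∈ U ∧ x = g ⊗ₜ[k] a} := by
  have hrec : ∀ f : (Module.Basis.ofVectorSpaceIndex k A) →₀ H, (∀ i, f i ∈ U) →
      (rightEquiv (k := k)).symm f ∈
        Submodule.span k {x : H ⊗[k] A | ∃ (g : H) (a : A), g ∈ U ∧ x = g ⊗ₜ[k] a} := by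
    intro f
    induction f using Finsupp.induction with
    | zero => intro _; simp only [map_zero]; exact Submodule.zero_mem _
    | single_add i b f hi hb ih =>
        intro hmem
        rw [map_add]
        refine Submodule.add_mem _ ?_ (ih fun j => ?_)
        · have hb' : b ∈ U := by
            have := hmem i
            rwa [Finsupp.add_apply, Finsupp.single_eq_same, Finsupp.notMem_support_iff.1 hi,
              add_zero] at this
          have : (rightEquiv (k := k)).symm (Finsupp.single i b) =
              b ⊗ₜ[k] ((Module.Basis.ofVectorSpace k A).repr.symm (Finsupp.single i 1)) := by
            simp [rightEquiv, TensorProduct.finsuppScalarRight_symm_apply_single]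
          rw [this]
          exact Submodule.subset_span ⟨b, _, hb', rfl⟩
        · by_cases hji : j = i
          · subst hji; rw [Finsupp.notMem_support_iff.1 hi]; exact U.zero_mem
          · have := hmem j
            rwa [Finsupp.add_apply, Finsupp.single_eq_of_ne hji, zero_add] at this
  have := hrec (rightEquiv t) h
  rwa [LinearEquiv.symm_apply_apply] at this

lemma mem_span_inter (U : Submodule k H) (V : Submodule k A) (t : H ⊗[k] A)
    (h1 : t ∈ Submodule.span k {x : H ⊗[k] A | ∃ (g : H) (a : A), a ∈ V ∧ x = g ⊗ₜ[k] a})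
    (h2 : t ∈ Submodule.span k {x : H ⊗[k] A | ∃ (g : H) (a : A), g ∈ U ∧ x = g ⊗ₜ[k] a}) :
    t ∈ Submodule.span k
      {x : H ⊗[k] A | ∃ (g : H) (a : A), g ∈ U ∧ a ∈ V ∧ x = g ⊗ₜ[k] a} := by
  obtain ⟨U', hU⟩ := Submodule.exists_isCompl U
  obtain ⟨V', hV⟩ := Submodule.exists_isCompl V
  set πH : H →ₗ[k] H := U.subtype ∘ₗ U.linearProjOfIsCompl U' hU with hπH
  set πA : A →ₗ[k] A := V.subtype ∘ₗ V.linearProjOfIsCompl V' hV with hπA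
  have hπHid : ∀ g ∈ U, πH g = g := by
    intro g hg
    have : πH ((⟨g, hg⟩ : U) : H) = _ := congrArg (U.subtype)
      (Submodule.linearProjOfIsCompl_apply_left hU ⟨g, hg⟩)
    simpa [hπH] using this
  have hπAid : ∀ a ∈ V, πA a = a := by
    intro a ha
    have : πA ((⟨a, ha⟩ : V) : A) = _ := congrArg (V.subtype)
      (Submodule.linearProjOfIsCompl_apply_left hV ⟨a, ha⟩)
    simpa [hπA] using this
  have hπHU : ∀ g : H, πH g ∈ U := fun g => (U.linearProjOfIsCompl U' hU g).2
  have hπAV : ∀ a : A, πA a ∈ V := fun a => (V.linearProjOfIsCompl V' hV a).2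
  have fix2 : ∀ s, s ∈ Submodule.span k
      {x : H ⊗[k] A | ∃ (g : H) (a : A), g ∈ U ∧ x = g ⊗ₜ[k] a} →
      LinearMap.rTensor A πH s = s := fun s hs =>
    Submodule.span_induction (p := fun x _ => LinearMap.rTensor A πH x = x)
      (fun x hx => by
        obtain ⟨g, a, hg, rfl⟩ := hx
        rw [LinearMap.rTensor_tmul, hπHid g hg])
      (by simp)
      (fun x y _ _ ihx ihy => by simp only [map_add, ihx, ihy])
      (fun c x _ ihx => by simp only [map_smul, ihx]) hs
  have fix1 : ∀ s, s ∈ Submodule.span k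
      {x : H ⊗[k] A | ∃ (g : H) (a : A), a ∈ V ∧ x = g ⊗ₜ[k] a} →
      LinearMap.lTensor H πA s = s := fun s hs =>
    Submodule.span_induction (p := fun x _ => LinearMap.lTensor H πA x = x)
      (fun x hx => by
        obtain ⟨g, a, ha, rfl⟩ := hx
        rw [LinearMap.lTensor_tmul, hπAid a ha])
      (by simp)
      (fun x y _ _ ihx ihy => by simp only [map_add, ihx, ihy])
      (fun c x _ ihx => by simp only [map_smul, ihx]) hs
  have hmap : TensorProduct.map πH πA t = t := by
    rw [← LinearMap.lTensor_comp_rTensor, LinearMap.comp_apply, fix2 t h2, fix1 t h1]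
  have final : ∀ s : H ⊗[k] A, TensorProduct.map πH πA s ∈ Submodule.span k
      {x : H ⊗[k] A | ∃ (g : H) (a : A), g ∈ U ∧ a ∈ V ∧ x = g ⊗ₜ[k] a} := by
    intro s
    induction s using TensorProduct.induction_on with
    | zero => simp only [map_zero]; exact Submodule.zero_mem _
    | tmul g a =>
        rw [TensorProduct.map_tmul]
        exact Submodule.subset_span ⟨_, _, hπHU g, hπAV a, rfl⟩
    | add x y hx hy => rw [map_add]; exact Submodule.add_mem _ hx hy
  rw [← hmap]
  exact final t

end LinAlgAux

section CommTransport
open Coalgebra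

variable {k : Type} [Field k] {H A B : Type} [Ring H] [Ring A] [Ring B]
  [HopfAlgebra k H] [Algebra k A] [Algebra k B] {act : A →ₗ[k] H →ₗ[k] A}
variable (S : SmashProduct k H A B act) (φ : B →ₐ[k] A)

lemma ThetaT_lTensor_comm (hφ : ∀ a : A, φ (S.ιA a) = a) (a : A) (t : H ⊗[k] A) :
    ThetaT S φ (LinearMap.lTensor H (LinearMap.mulRight k a - LinearMap.mulLeft k a) t)
      = ThetaT S φ t * S.ιA a - S.ιA a * ThetaT S φ t := by
  induction t using TensorProduct.induction_on with
  | zero => simp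
  | tmul g c =>
      rw [LinearMap.lTensor_tmul, LinearMap.sub_apply, LinearMap.mulRight_apply,
        LinearMap.mulLeft_apply, TensorProduct.tmul_sub, map_sub, ThetaT_tmul, ThetaT_tmul,
        ThetaT_tmul, map_mul, map_mul]
      congr 1
      · exact (mul_assoc _ _ _).symm
      · rw [← mul_assoc, ← zeta_commutes S φ hφ, mul_assoc]
  | add x y hx hy =>
      simp only [map_add, hx, hy]
      rw [add_mul, mul_add]
      abel

lemma ThetaT_rTensor_comm (hφ : ∀ a : A, φ (S.ιA a) = a) (g : H) (t : H ⊗[k] A) :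
    ThetaT S φ (LinearMap.rTensor A (LinearMap.mulRight k g - LinearMap.mulLeft k g) t)
      = ThetaT S φ t * zeta S φ g - zeta S φ g * ThetaT S φ t := by
  induction t using TensorProduct.induction_on with
  | zero => simp
  | tmul h c =>
      rw [LinearMap.rTensor_tmul, LinearMap.sub_apply, LinearMap.mulRight_apply,
        LinearMap.mulLeft_apply, TensorProduct.sub_tmul, map_sub, ThetaT_tmul, ThetaT_tmul,
        ThetaT_tmul, zeta_mul S φ hφ, zeta_mul S φ hφ]
      congr 1
      · rw [mul_assoc, ← zeta_commutes S φ hφ c g, ← mul_assoc]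
      · exact mul_assoc _ _ _
  | add x y hx hy =>
      simp only [map_add, hx, hy]
      rw [add_mul, mul_add]
      abel

end CommTransport
section MainAux
open Coalgebra

variable {k : Type} [Field k] {H A B : Type} [Ring H] [Ring A] [Ring B]
  [HopfAlgebra k H] [Algebra k A] [Algebra k B] {act : A →ₗ[k] H →ₗ[k] A}
variable (S : SmashProduct k H A B act) (φ : B →ₐ[k] A)

lemma gen_mul (hφ : ∀ a : A, φ (S.ιA a) = a) (a a' : A) (g g' : H) :
    (S.ιA a * zeta S φ g) * (S.ιA a' * zeta S φ g') =
      S.ιA (a * a') * zeta S φ (g * g') := by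
  rw [zeta_mul S φ hφ, map_mul, mul_assoc, ← mul_assoc (zeta S φ g),
    ← zeta_commutes S φ hφ a' g, mul_assoc, ← mul_assoc]

end MainAux
/-- if `H_c ⊆ H` and `A_c ⊆ A` are maximal abelian subalgebras, then
`A_c · ζ̃(H_c)` is a maximal abelian subalgebra of `A >⋊ H`. -/
theorem maximal_abelian
    (hMA : RightModuleAlgebra k H A act)
    (S : SmashProduct k H A B act) (φ : B →ₐ[k] A)
    (hφ : ∀ a : A, φ (S.ιA a) = a)
    (Hc : Subalgebra k H) (Ac : Subalgebra k A)
    (hHcComm : ∀ x ∈ Hc, ∀ y ∈ Hc, x * y = y * x)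
    (hHcMax : ∀ x : H, (∀ y ∈ Hc, x * y = y * x) → x ∈ Hc)
    (hAcComm : ∀ x ∈ Ac, ∀ y ∈ Ac, x * y = y * x)
    (hAcMax : ∀ x : A, (∀ y ∈ Ac, x * y = y * x) → x ∈ Ac) :
    (∀ x ∈ Submodule.span k
        {b : B | ∃ a ∈ Ac, ∃ g ∈ Hc, b = S.ιA a * zeta S φ g},
      ∀ y ∈ Submodule.span k
        {b : B | ∃ a ∈ Ac, ∃ g ∈ Hc, b = S.ιA a * zeta S φ g},
      x * y = y * x) ∧
    (∀ b : B, (∀ y ∈ Submodule.span k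
        {b : B | ∃ a ∈ Ac, ∃ g ∈ Hc, b = S.ιA a * zeta S φ g}, b * y = y * b) →
      b ∈ Submodule.span k
        {b : B | ∃ a ∈ Ac, ∃ g ∈ Hc, b = S.ιA a * zeta S φ g}) := by

  classical
  set Z : Set B := {b : B | ∃ a ∈ Ac, ∃ g ∈ Hc, b = S.ιA a * zeta S φ g} with hZ
  constructor
  · -- commutativity
    have base : ∀ x ∈ Z, ∀ y ∈ Z, x * y = y * x := by
      rintro x ⟨a, ha, g, hg, rfl⟩ y ⟨a', ha', g', hg', rfl⟩
      rw [gen_mul S φ hφ, gen_mul S φ hφ, hAcComm a ha a' ha', hHcComm g hg g' hg']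
    have gen : ∀ x ∈ Z, ∀ y ∈ Submodule.span k Z, x * y = y * x := by
      intro x hx y hy
      refine Submodule.span_induction (p := fun y _ => x * y = y * x)
        (fun y hy => base x hx y hy) (by simp)
        (fun y z _ _ ihy ihz => by rw [mul_add, add_mul, ihy, ihz])
        (fun c y _ ihy => by
          rw [Algebra.mul_smul_comm, Algebra.smul_mul_assoc, ihy]) hy
    intro x hx y hy
    refine Submodule.span_induction (p := fun x _ => x * y = y * x)
      (fun x hx => gen x hx y hy) (by simp)
      (fun w z _ _ ihw ihz => by rw [add_mul, mul_add, ihw, ihz])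
      (fun c w _ ihw => by
        rw [Algebra.smul_mul_assoc, Algebra.mul_smul_comm, ihw]) hx
  · -- maximality
    intro b hb
    have hb1 : ∀ a ∈ Ac, b * S.ιA a = S.ιA a * b := by
      intro a ha
      have : S.ιA a ∈ Submodule.span k Z :=
        Submodule.subset_span ⟨a, ha, 1, Hc.one_mem, by rw [zeta_one, mul_one]⟩
      exact hb _ this
    have hb2 : ∀ g ∈ Hc, b * zeta S φ g = zeta S φ g * b := by
      intro g hg
      have : zeta S φ g ∈ Submodule.span k Z :=
        Submodule.subset_span ⟨1, Ac.one_mem, g, hg, by rw [map_one, one_mul]⟩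
      exact hb _ this
    obtain ⟨t, rfl⟩ := (ThetaT_bijective S φ).2 b
    have hker1 : ∀ a ∈ Ac,
        LinearMap.lTensor H (LinearMap.mulRight k a - LinearMap.mulLeft k a) t = 0 := by
      intro a ha
      apply (ThetaT_bijective S φ).1
      rw [map_zero, ThetaT_lTensor_comm S φ hφ, hb1 a ha, sub_self]
    have hker2 : ∀ g ∈ Hc,
        LinearMap.rTensor A (LinearMap.mulRight k g - LinearMap.mulLeft k g) t = 0 := by
      intro g hg
      apply (ThetaT_bijective S φ).1
      rw [map_zero, ThetaT_rTensor_comm S φ hφ, hb2 g hg, sub_self]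
    have hcomp1 : ∀ i, leftEquiv t i ∈ Subalgebra.toSubmodule Ac := by
      intro i
      rw [Subalgebra.mem_toSubmodule]
      apply hAcMax
      intro y hy
      have h0 := leftEquiv_lTensor (LinearMap.mulRight k y - LinearMap.mulLeft k y) t i
      rw [hker1 y hy, map_zero, Finsupp.zero_apply] at h0
      have := h0.symm
      rw [LinearMap.sub_apply, LinearMap.mulRight_apply, LinearMap.mulLeft_apply,
        sub_eq_zero] at this
      exact this
    have hcomp2 : ∀ i, rightEquiv t i ∈ Subalgebra.toSubmodule Hc := by
      intro i
      rw [Subalgebra.mem_toSubmodule]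
      apply hHcMax
      intro y hy
      have h0 := rightEquiv_rTensor (LinearMap.mulRight k y - LinearMap.mulLeft k y) t i
      rw [hker2 y hy, map_zero, Finsupp.zero_apply] at h0
      have := h0.symm
      rw [LinearMap.sub_apply, LinearMap.mulRight_apply, LinearMap.mulLeft_apply,
        sub_eq_zero] at this
      exact this
    have ht1 := mem_span_of_leftEquiv (Subalgebra.toSubmodule Ac) t hcomp1
    have ht2 := mem_span_of_rightEquiv (Subalgebra.toSubmodule Hc) t hcomp2
    have ht := mem_span_inter (Subalgebra.toSubmodule Hc) (Subalgebra.toSubmodule Ac) t ht1 ht2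
    refine Submodule.span_induction
      (p := fun x _ => ThetaT S φ x ∈ Submodule.span k Z) ?_ ?_ ?_ ?_ ht
    · rintro x ⟨g, a, hg, ha, rfl⟩
      rw [ThetaT_tmul]
      exact Submodule.subset_span ⟨a, ha, g, hg, (zeta_commutes S φ hφ a g).symm⟩
    · simp only [map_zero]; exact Submodule.zero_mem _
    · intro x y _ _ ihx ihy
      rw [map_add]
      exact Submodule.add_mem _ ihx ihy
    · intro c x _ ihx
      rw [map_smul]
      exact Submodule.smul_mem _ _ ihx
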